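/- Let G be a finite group, N ⊴ G a normal subgroup, and H_1, …, H_k core-free subgroups of G. Suppose m > 0 is a real number such that fpr(x, G/H_j) < |x^N|^{−m} for every element x ∈ G of prime order and every j ∈ {1, …, k}, and suppose that Σ_{i=1}^s |y_i^N|^{−(km−1)} < 1, where y_1, …, y_s are representatives of the N-conjugacy classes of prime-order elements of G. Then the tuple (H_1, …, H_k) is regular: there exist g_1, …, g_k ∈ G with ⋂_{j=1}^k H_j^{g_j} = 1. -/

import Mathlib

/-- `conjSub H g` is the conjugate subgroup `H ^ g = g⁻¹ H g`. -/
def conjSub {G : Type*} [Group G] (H : Subgroup G) (g : G) : Subgroup G :=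
  Subgroup.comap (MulAut.conj g).toMonoidHom H

/-- The fixed point ratio of `x` in the action of `G` on the coset space `G/H`. -/
noncomputable def fpr (G : Type*) [Group G] (H : Subgroup G) (x : G) : ℝ :=
  (Nat.card (MulAction.fixedBy (G ⧸ H) x) : ℝ) / (Nat.card (G ⧸ H) : ℝ)

section Aux

open Finset

variable {G : Type*} [Group G]

lemma mem_conjSub {H : Subgroup G} {a x : G} :
    x ∈ conjSub H a ↔ a * x * a⁻¹ ∈ H := Iff.rfl

lemma exists_prime_order_mem [Finite G] (K : Subgroup G) (hK : K ≠ ⊥) :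
    ∃ z ∈ K, (orderOf z).Prime := by
  obtain ⟨x, hxK, hx1⟩ := K.bot_or_exists_ne_one.resolve_left hK
  have hord : orderOf x ≠ 1 := by simpa using hx1
  have hord0 : orderOf x ≠ 0 := (orderOf_pos x).ne'
  set p := (orderOf x).minFac with hp
  have hpp : p.Prime := Nat.minFac_prime hord
  have hpd : p ∣ orderOf x := Nat.minFac_dvd _
  refine ⟨x ^ (orderOf x / p), K.pow_mem hxK _, ?_⟩
  rw [orderOf_pow, Nat.gcd_eq_right (Nat.div_dvd_of_dvd hpd), Nat.div_div_self hpd hord0]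
  exact hpp

lemma card_filter_conj [Fintype G] (H : Subgroup G) (x : G)
    [DecidablePred fun a : G => x ∈ conjSub H a] :
    (((Finset.univ.filter fun a : G => x ∈ conjSub H a).card : ℝ))
      = fpr G H x * (Nat.card G : ℝ) := by
  have e : {a : G // x ∈ conjSub H a} ≃
      (QuotientGroup.mk ⁻¹' (MulAction.fixedBy (G ⧸ H) x) : Set G) := by
    refine (Equiv.inv G).subtypeEquiv fun a => ?_
    simp only [Set.mem_preimage, MulAction.mem_fixedBy, Equiv.inv_apply]
    rw [MulAction.Quotient.smul_mk, QuotientGroup.eq]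
    have key : (x • a⁻¹)⁻¹ * a⁻¹ = (a * x * a⁻¹)⁻¹ := by
      simp only [smul_eq_mul]; group
    rw [key, H.inv_mem_iff]
    exact mem_conjSub
  have hc : (Finset.univ.filter fun a : G => x ∈ conjSub H a).card
      = Nat.card H * Nat.card (MulAction.fixedBy (G ⧸ H) x) := by
    rw [← Fintype.card_subtype, ← Nat.card_eq_fintype_card, Nat.card_congr e,
      Nat.card_congr (QuotientGroup.preimageMkEquivSubgroupProdSet H _), Nat.card_prod]
  have hG : (Nat.card G : ℝ) = (Nat.card (G ⧸ H) : ℝ) * (Nat.card H : ℝ) := by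
    rw [← Nat.cast_mul, ← Subgroup.card_eq_card_quotient_mul_card_subgroup H]
  have hQ : (Nat.card (G ⧸ H) : ℝ) ≠ 0 := by
    have : 0 < Nat.card (G ⧸ H) := Nat.card_pos
    exact_mod_cast this.ne'
  rw [hc, fpr, hG]
  push_cast
  field_simp

lemma prod_lt_prod_aux {ι : Type*} (s : Finset ι) (hs : s.Nonempty) (f g : ι → ℝ)
    (hf : ∀ i ∈ s, 0 ≤ f i) (h : ∀ i ∈ s, f i < g i) :
    ∏ i ∈ s, f i < ∏ i ∈ s, g i := by
  by_cases hpos : ∀ i ∈ s, 0 < f i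
  · exact Finset.prod_lt_prod_of_nonempty hpos h hs
  · push_neg at hpos
    obtain ⟨i, his, hi⟩ := hpos
    have hfi : f i = 0 := le_antisymm hi (hf i his)
    rw [Finset.prod_eq_zero his hfi]
    exact Finset.prod_pos fun j hj => lt_of_le_of_lt (hf j hj) (h j hj)

end Aux

/-- If `fpr(x, G/Hⱼ) < |x^N|^{-m}` for all prime order `x ∈ G` and all `j`, and
`Σᵢ |yᵢ^N|^{-(km-1)} < 1` over representatives `yᵢ` of the `N`-classes of prime
order elements, then the tuple `(H₁, …, H_k)` is regular. -/
theorem stmt19 {G : Type*} [Group G] [Fintype G] (N : Subgroup G) [N.Normal]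
    {k s : ℕ} (H : Fin k → Subgroup G) (hH : ∀ j, (H j).normalCore = ⊥)
    (m : ℝ) (hm : 0 < m)
    (hfpr : ∀ x : G, (orderOf x).Prime → ∀ j,
      fpr G (H j) x < (Nat.card {z : G // ∃ n ∈ N, n⁻¹ * x * n = z} : ℝ) ^ (-m))
    (y : Fin s → G)
    (hy1 : ∀ i, (orderOf (y i)).Prime)
    (hy2 : ∀ i i', (∃ n ∈ N, n⁻¹ * y i * n = y i') → i = i')
    (hy3 : ∀ g : G, (orderOf g).Prime → ∃ i, ∃ n ∈ N, n⁻¹ * g * n = y i)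
    (hsum : ∑ i, (Nat.card {z : G // ∃ n ∈ N, n⁻¹ * y i * n = z} : ℝ) ^
        (-((k : ℝ) * m - 1)) < 1) :
    ∃ g : Fin k → G, (⨅ j, conjSub (H j) (g j)) = ⊥ := by
  classical
  -- notation for N-class sizes
  set c : G → ℕ := fun x => Nat.card {z : G // ∃ n ∈ N, n⁻¹ * x * n = z} with hc
  have hcpos : ∀ x : G, 0 < c x := by
    intro x
    have : Nonempty {z : G // ∃ n ∈ N, n⁻¹ * x * n = z} :=
      ⟨⟨x, 1, N.one_mem, by simp⟩⟩
    exact Nat.card_pos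
  -- trivial group case
  by_cases hG : ∀ a : G, a = 1
  · refine ⟨fun _ => 1, ?_⟩
    rw [Subgroup.eq_bot_iff_forall]
    intro z _
    exact hG z
  push_neg at hG
  obtain ⟨a, ha⟩ := hG
  have htopbot : (⊤ : Subgroup G) ≠ ⊥ := by
    intro h
    exact ha (Subgroup.mem_bot.1 (h ▸ Subgroup.mem_top a))
  obtain ⟨x0, -, hx0⟩ := exists_prime_order_mem (⊤ : Subgroup G) htopbot
  -- the class of any z N-conjugate to y i equals the class of y i
  have hclass : ∀ (i : Fin s) (z : G), (∃ n ∈ N, n⁻¹ * y i * n = z) → c z = c (y i) := by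
    intro i z ⟨n, hn, hnz⟩
    apply Nat.card_congr
    refine Equiv.subtypeEquivRight fun w => ?_
    constructor
    · rintro ⟨n', hn', rfl⟩
      exact ⟨n * n', N.mul_mem hn hn', by rw [← hnz]; group⟩
    · rintro ⟨n'', hn'', rfl⟩
      exact ⟨n⁻¹ * n'', N.mul_mem (N.inv_mem hn) hn'', by rw [← hnz]; group⟩
  -- prime order elements
  set P : Finset G := Finset.univ.filter fun x => (orderOf x).Prime with hP
  have hx0P : x0 ∈ P := by simp [hP, hx0]
  -- the classes C i
  set C : Fin s → Finset G := fun i =>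
    Finset.univ.filter fun z => ∃ n ∈ N, n⁻¹ * y i * n = z with hC
  have hPC : P = Finset.univ.biUnion C := by
    ext z
    simp only [hP, hC, Finset.mem_filter, Finset.mem_univ, true_and, Finset.mem_biUnion]
    constructor
    · intro hz
      obtain ⟨i, n, hn, hnz⟩ := hy3 z hz
      exact ⟨i, ⟨n⁻¹, N.inv_mem hn, by rw [← hnz]; group⟩⟩
    · rintro ⟨i, n, hn, rfl⟩
      have : orderOf (n⁻¹ * y i * n) = orderOf (y i) := by
        have := (MulAut.conj n⁻¹).orderOf_eq (y i)
        simpa [MulAut.conj_apply, mul_assoc] using this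
      rw [this]
      exact hy1 i
  have hdisj : ((Finset.univ : Finset (Fin s)) : Set (Fin s)).PairwiseDisjoint C := by
    intro i _ i' _ hii
    refine Finset.disjoint_left.2 fun z hzi hzi' => ?_
    simp only [hC, Finset.mem_filter, Finset.mem_univ, true_and] at hzi hzi'
    obtain ⟨n, hn, hnz⟩ := hzi
    obtain ⟨n', hn', hnz'⟩ := hzi'
    apply hii
    apply hy2
    refine ⟨n * n'⁻¹, N.mul_mem hn (N.inv_mem hn'), ?_⟩
    rw [← hnz'] at hnz
    have key : n' * (n⁻¹ * y i * n) * n'⁻¹ = y i' := by rw [hnz]; group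
    rw [← key]; group
  -- degenerate case k = 0
  rcases Nat.eq_zero_or_pos k with hk0 | hkpos
  · exfalso
    obtain ⟨i0, -⟩ := hy3 x0 hx0
    have h1 : (1 : ℝ) ≤ (c (y i0) : ℝ) ^ (-((k : ℝ) * m - 1)) := by
      rw [hk0]
      simp only [Nat.cast_zero, zero_mul, zero_sub, neg_neg, Real.rpow_one]
      exact_mod_cast hcpos (y i0)
    have h2 : (c (y i0) : ℝ) ^ (-((k : ℝ) * m - 1)) ≤
        ∑ i, (c (y i) : ℝ) ^ (-((k : ℝ) * m - 1)) := by
      refine Finset.single_le_sum (f := fun i => ((c (y i) : ℝ)) ^ (-((k : ℝ) * m - 1)))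
        (fun i _ => by positivity) (Finset.mem_univ i0)
    linarith
  -- main case: suppose no regular tuple exists
  by_contra hcon
  push_neg at hcon
  -- counting: every tuple admits a prime order element in the intersection
  have hsub : (Finset.univ : Finset (Fin k → G)) ⊆
      P.biUnion fun x => Fintype.piFinset fun j =>
        Finset.univ.filter fun a : G => x ∈ conjSub (H j) a := by
    intro g _
    obtain ⟨z, hz, hzp⟩ := exists_prime_order_mem _ (hcon g)
    refine Finset.mem_biUnion.2 ⟨z, by simp [hP, hzp], ?_⟩
    rw [Fintype.mem_piFinset]
    intro j
    simp only [Finset.mem_filter, Finset.mem_univ, true_and]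
    exact (Subgroup.mem_iInf.1 hz) j
  have step1 : ((Fintype.card G : ℝ)) ^ k ≤
      ∑ x ∈ P, ∏ j, ((Finset.univ.filter fun a : G => x ∈ conjSub (H j) a).card : ℝ) := by
    have hnat : (Fintype.card G) ^ k ≤
        ∑ x ∈ P, ∏ j, (Finset.univ.filter fun a : G => x ∈ conjSub (H j) a).card := by
      calc (Fintype.card G) ^ k = (Finset.univ : Finset (Fin k → G)).card := by
            simp [Finset.card_univ]
        _ ≤ (P.biUnion fun x => Fintype.piFinset fun j =>
              Finset.univ.filter fun a : G => x ∈ conjSub (H j) a).card :=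
            Finset.card_le_card hsub
        _ ≤ ∑ x ∈ P, (Fintype.piFinset fun j =>
              Finset.univ.filter fun a : G => x ∈ conjSub (H j) a).card :=
            Finset.card_biUnion_le
        _ = ∑ x ∈ P, ∏ j, (Finset.univ.filter fun a : G => x ∈ conjSub (H j) a).card := by
            simp [Fintype.card_piFinset]
    exact_mod_cast hnat
  -- rewrite filter cards with fpr
  have step2 : ∑ x ∈ P, ∏ j, ((Finset.univ.filter fun a : G => x ∈ conjSub (H j) a).card : ℝ)
      = ∑ x ∈ P, (∏ j, fpr G (H j) x) * ((Fintype.card G : ℝ)) ^ k := by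
    refine Finset.sum_congr rfl fun x _ => ?_
    calc ∏ j, ((Finset.univ.filter fun a : G => x ∈ conjSub (H j) a).card : ℝ)
        = ∏ j, (fpr G (H j) x * (Fintype.card G : ℝ)) := by
          refine Finset.prod_congr rfl fun j _ => ?_
          rw [card_filter_conj (H j) x, Nat.card_eq_fintype_card]
      _ = (∏ j, fpr G (H j) x) * ∏ _j : Fin k, (Fintype.card G : ℝ) :=
          Finset.prod_mul_distrib
      _ = (∏ j, fpr G (H j) x) * ((Fintype.card G : ℝ)) ^ k := by
          rw [Finset.prod_const, Finset.card_univ, Fintype.card_fin]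
  -- bound each product of fixed point ratios
  have step3 : ∀ x ∈ P, ∏ j, fpr G (H j) x < (c x : ℝ) ^ (-((k : ℝ) * m)) := by
    intro x hx
    have hxp : (orderOf x).Prime := (Finset.mem_filter.1 hx).2
    have hne : (Finset.univ : Finset (Fin k)).Nonempty := ⟨⟨0, hkpos⟩, Finset.mem_univ _⟩
    have hnn : ∀ j ∈ (Finset.univ : Finset (Fin k)), 0 ≤ fpr G (H j) x := by
      intro j _
      simp only [fpr]
      positivity
    calc ∏ j, fpr G (H j) x < ∏ _j : Fin k, (c x : ℝ) ^ (-m) :=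
          prod_lt_prod_aux Finset.univ hne _ _ hnn (fun j _ => hfpr x hxp j)
      _ = (c x : ℝ) ^ (-((k : ℝ) * m)) := by
          rw [Finset.prod_const, Finset.card_univ, Fintype.card_fin,
            ← Real.rpow_natCast ((c x : ℝ) ^ (-m)) k, ← Real.rpow_mul (Nat.cast_nonneg _)]
          congr 1
          ring
  -- regroup the sum over prime order elements into N-classes
  have step4 : ∑ x ∈ P, (c x : ℝ) ^ (-((k : ℝ) * m))
      = ∑ i, (c (y i) : ℝ) ^ (-((k : ℝ) * m - 1)) := by
    rw [hPC, Finset.sum_biUnion hdisj]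
    refine Finset.sum_congr rfl fun i _ => ?_
    have hcongr : ∀ z ∈ C i, (c z : ℝ) ^ (-((k : ℝ) * m))
        = (c (y i) : ℝ) ^ (-((k : ℝ) * m)) := by
      intro z hz
      rw [hclass i z (by simpa [hC] using hz)]
    rw [Finset.sum_congr rfl hcongr, Finset.sum_const, nsmul_eq_mul]
    have hcard : (C i).card = c (y i) := by
      simp only [hC, hc]
      rw [Nat.card_eq_fintype_card, Fintype.card_subtype]
    rw [hcard, show -((k : ℝ) * m - 1) = 1 + -((k : ℝ) * m) by ring,
      Real.rpow_add (by exact_mod_cast hcpos (y i)), Real.rpow_one]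
  -- assemble
  have hPne : P.Nonempty := ⟨x0, hx0P⟩
  have s34 : ∑ x ∈ P, ∏ j, fpr G (H j) x < 1 :=
    calc ∑ x ∈ P, ∏ j, fpr G (H j) x
        < ∑ x ∈ P, (c x : ℝ) ^ (-((k : ℝ) * m)) :=
          Finset.sum_lt_sum_of_nonempty hPne step3
      _ = ∑ i, (c (y i) : ℝ) ^ (-((k : ℝ) * m - 1)) := step4
      _ < 1 := hsum
  have hGpos : (0 : ℝ) < (Fintype.card G : ℝ) := by exact_mod_cast Fintype.card_pos
  have hpow : (0 : ℝ) < ((Fintype.card G : ℝ)) ^ k := pow_pos hGpos k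
  have hfin : ((Fintype.card G : ℝ)) ^ k ≤
      (∑ x ∈ P, ∏ j, fpr G (H j) x) * ((Fintype.card G : ℝ)) ^ k := by
    rw [Finset.sum_mul]
    exact step1.trans_eq step2
  nlinarith [mul_lt_mul_of_pos_right s34 hpow]
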